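/- Let S be a string, a a character, and u a nonempty prefix of S with occ_S(u) ≥ 2 such that no strictly longer prefix of S occurs at least twice in S (u is the longest repeated prefix of S). If occ_S(au) = 0, then |u| < |S| and, setting b = S[|u|+1], we have (a, b) ∈ Φ_{aS}(u) and (a, b) ∉ Φ_S(u); moreover occ_{aS}(u) ≥ 2. -/

import Mathlib

variable {Γ : Type*} [DecidableEq Γ]

/-- `occ S w` is the number of occurrences of `w` as a contiguous substring of `S`,
i.e., the number of (0-based) indices `i` with `S[i..i+|w|-1] = w`. -/
def occ (S w : List Γ) : ℕ :=
  ((List.range S.length).filter fun i => (S.drop i).take w.length = w).length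

/-- `Phi S w` is the set of pairs `(α, β)` of characters such that
`occ S (αwβ) = occ S (αw) = occ S (wβ) = 1`. -/
def Phi (S w : List Γ) : Set (Γ × Γ) :=
  {p | occ S (p.1 :: (w ++ [p.2])) = 1 ∧ occ S (p.1 :: w) = 1 ∧ occ S (w ++ [p.2]) = 1}

/-- The net frequency of `w` in `S`. -/
noncomputable def phi (S w : List Γ) : ℕ := (Phi S w).ncard

lemma occ_eq (S w : List Γ) :
    occ S w = (List.range S.length).countP fun i => (S.drop i).take w.length = w := by
  rw [occ, List.countP_eq_length_filter]

lemma occ_cons (a : Γ) (S w : List Γ) :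
    occ (a :: S) w = occ S w + (if (a :: S).take w.length = w then 1 else 0) := by
  rw [occ_eq, occ_eq, List.length_cons, List.range_succ_eq_map, List.countP_cons,
    List.countP_map]
  simp only [Function.comp_def, List.drop_succ_cons, List.drop_zero]
  simp [decide_eq_true_eq]

lemma occ_mono (S : List Γ) {w₁ w₂ : List Γ} (h : w₁ <+: w₂) : occ S w₂ ≤ occ S w₁ := by
  rw [occ_eq, occ_eq]
  apply List.countP_mono_left
  intro i _ hi
  simp only [decide_eq_true_eq] at *
  obtain ⟨t, rfl⟩ := h
  have h2 := congrArg (List.take w₁.length) hi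
  rwa [List.take_take, min_eq_left (by simp), List.take_left] at h2

lemma occ_pos_of_prefix {S w : List Γ} (hw : w ≠ []) (h : w <+: S) : 1 ≤ occ S w := by
  rw [occ_eq, Nat.succ_le_iff, List.countP_pos_iff]
  refine ⟨0, ?_, ?_⟩
  · simp only [List.mem_range]
    have := h.length_le
    have := List.length_pos_iff.mpr hw
    omega
  · simp only [List.drop_zero, decide_eq_true_eq]
    exact (List.prefix_iff_eq_take.mp h).symm

lemma len_bound {S w : List Γ} {i : ℕ} (h : (S.drop i).take w.length = w) :
    w.length + i ≤ S.length ∨ S.length ≤ i := by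
  have := congrArg List.length h
  simp [List.length_take, List.length_drop] at this
  omega

/-- Let `u` be the longest repeated prefix of `S`, nonempty, and suppose
`occ S (a :: u) = 0`. Then `|u| < |S|` and, with `b = S[|u|+1]` (so `u ++ [b]` is a
prefix of `S`), `(a, b) ∈ Phi (a :: S) u`, `(a, b) ∉ Phi S u`, and `occ (a :: S) u ≥ 2`. -/
theorem stmt8 (S : List Γ) (a : Γ) (u : List Γ) (hu : u ≠ [])
    (hpre : u <+: S) (hrep : 2 ≤ occ S u)
    (hlong : ∀ u' : List Γ, u' <+: S → 2 ≤ occ S u' → u'.length ≤ u.length)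
    (hzero : occ S (a :: u) = 0) :
    u.length < S.length ∧
    2 ≤ occ (a :: S) u ∧
    ∀ b : Γ, (u ++ [b]) <+: S →
      (a, b) ∈ Phi (a :: S) u ∧ (a, b) ∉ Phi S u := by
  have htake : S.take u.length = u := (List.prefix_iff_eq_take.mp hpre).symm
  have hlen : u.length < S.length := by
    by_contra hc
    push_neg at hc
    have hF : (((List.range S.length).filter
        fun i => (S.drop i).take u.length = u)).length ≤ 1 := by
      have hnd : (((List.range S.length).filter
          fun i => (S.drop i).take u.length = u)).Nodup :=
        List.nodup_range.filter _
      have hsub : (((List.range S.length).filter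
          fun i => (S.drop i).take u.length = u)) ⊆ [0] := by
        intro i hi
        simp only [List.mem_filter, List.mem_range, decide_eq_true_eq] at hi
        have := len_bound hi.2
        have hupos := List.length_pos_iff.mpr hu
        simp only [List.mem_singleton]
        omega
      simpa using (hnd.subperm hsub).length_le
    rw [occ] at hrep
    omega
  refine ⟨hlen, ?_, ?_⟩
  · rw [occ_cons]
    split_ifs <;> omega
  · intro b hb
    have htakeb : S.take (u.length + 1) = u ++ [b] := by
      have := (List.prefix_iff_eq_take.mp hb).symm
      simpa using this
    have h1 : 1 ≤ occ S (u ++ [b]) := occ_pos_of_prefix (by simp) hb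
    have h2 : occ S (u ++ [b]) = 1 := by
      by_contra hc
      have h3 : 2 ≤ occ S (u ++ [b]) := by omega
      have := hlong _ hb h3
      simp at this
    have hz2 : occ S (a :: (u ++ [b])) = 0 := by
      have := occ_mono S (show (a :: u) <+: (a :: (u ++ [b])) from ⟨[b], by simp⟩)
      omega
    have e1 : occ (a :: S) (a :: u) = 1 := by
      rw [occ_cons, hzero]
      simp [List.take_succ_cons, htake]
    have e2 : occ (a :: S) (a :: (u ++ [b])) = 1 := by
      rw [occ_cons, hz2]
      simp only [List.length_cons, List.length_append, List.length_singleton,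
        List.take_succ_cons]
      simp [htakeb]
    have e3 : occ (a :: S) (u ++ [b]) = 1 := by
      rw [occ_cons, h2]
      have hne : ¬ (a :: S).take (u ++ [b]).length = u ++ [b] := by
        simp only [List.length_append, List.length_singleton, List.take_succ_cons]
        rw [htake]
        intro hcon
        rw [← hcon] at h2
        omega
      rw [if_neg hne]
    refine ⟨⟨e2, e1, e3⟩, ?_⟩
    intro hmem
    exact absurd hmem.2.1 (by simp [hzero])
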